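/- There exists a bounded linear operator T on a (nonzero) complex Hilbert space, namely T = e^{iπ/3}·I, such that T is bijective, T⁶ is positive, and Re(T⁷) ≥ 0, but T is not positive. Hence the pair of exponents (2, 2k+1) in the positivity criterion cannot be replaced by an arbitrary pair of coprime exponents (p, q) with p, q ≥ 2. -/

import Mathlib

/-- On any nonzero complex Hilbert space, the operator `T = e^{iπ/3}·I` is bijective,
`T⁶` is positive and `Re(T⁷) ≥ 0`, yet `T` is not positive. Hence the pair of exponents
`(2, 2k+1)` in the positivity criterion cannot be replaced by arbitrary coprime
exponents `(p, q)` with `p, q ≥ 2`. -/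
theorem exists_bijective_sixth_power_positive_seventh_accretive_not_positive
    {H : Type*} [NormedAddCommGroup H] [InnerProductSpace ℂ H] [CompleteSpace H]
    [Nontrivial H] :
    ∃ T : H →L[ℂ] H,
      T = Complex.exp (Real.pi / 3 * Complex.I) • (1 : H →L[ℂ] H) ∧
      Function.Bijective T ∧
      (T ^ 6).IsPositive ∧
      (∀ x : H, 0 ≤ (inner ℂ ((T ^ 7) x) x : ℂ).re) ∧
      ¬ T.IsPositive := by
  set c : ℂ := Complex.exp (Real.pi / 3 * Complex.I) with hc
  have hcval : c = Complex.exp ((Real.pi / 3 : ℝ) * Complex.I) := by push_cast [hc]; ring_nf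
  have hc0 : c ≠ 0 := Complex.exp_ne_zero _
  have hc6 : c ^ 6 = 1 := by
    rw [hc, ← Complex.exp_nat_mul]
    have : ((6 : ℕ) : ℂ) * ((Real.pi : ℂ) / 3 * Complex.I) = 2 * Real.pi * Complex.I := by
      push_cast; ring
    rw [this, Complex.exp_two_pi_mul_I]
  have hcim : c.im = Real.sin (Real.pi / 3) := by
    rw [hcval, Complex.exp_ofReal_mul_I_im]
  refine ⟨c • 1, rfl, ?_, ?_, ?_, ?_⟩
  · constructor
    · intro a b h
      simp only [ContinuousLinearMap.smul_apply, ContinuousLinearMap.one_apply] at h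
      exact smul_right_injective H hc0 h
    · intro y
      exact ⟨c⁻¹ • y, by simp [smul_smul, hc0]⟩
  · have : (c • (1 : H →L[ℂ] H)) ^ 6 = 1 := by
      rw [smul_pow, hc6, one_pow, one_smul]
    rw [this]
    exact ContinuousLinearMap.isPositive_one
  · intro x
    have h7 : (c • (1 : H →L[ℂ] H)) ^ 7 = c • 1 := by
      rw [smul_pow, one_pow, pow_succ, hc6, one_mul]
    rw [h7]
    simp only [ContinuousLinearMap.smul_apply, ContinuousLinearMap.one_apply]
    rw [inner_smul_left]
    have : ((starRingEnd ℂ) c).re = Real.cos (Real.pi / 3) := by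
      rw [Complex.conj_re, hcval, Complex.exp_ofReal_mul_I_re]
    have hre : (inner ℂ x x : ℂ) = ((‖x‖ ^ 2 : ℝ) : ℂ) := by
      rw [inner_self_eq_norm_sq_to_K]; norm_cast
    rw [hre, Complex.mul_re, this, Complex.ofReal_re, Complex.ofReal_im, mul_zero, sub_zero,
      Real.cos_pi_div_three]
    positivity
  · intro hpos
    obtain ⟨x, hx⟩ := exists_ne (0 : H)
    have hsa := hpos.isSelfAdjoint
    rw [ContinuousLinearMap.isSelfAdjoint_iff_isSymmetric] at hsa
    have := hsa x x
    simp only [ContinuousLinearMap.coe_smul, LinearMap.smul_apply, inner_smul_left,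
      inner_smul_right] at this
    simp only [ContinuousLinearMap.coe_coe, ContinuousLinearMap.one_apply] at this
    have hxx : (inner ℂ x x : ℂ) ≠ 0 := by
      exact (inner_self_ne_zero (𝕜 := ℂ)).mpr hx
    have hcc : (starRingEnd ℂ) c = c := mul_right_cancel₀ hxx this
    have : c.im = 0 := by
      have := congrArg Complex.im hcc
      simp only [Complex.conj_im] at this
      linarith
    rw [hcim] at this
    have hs : 0 < Real.sin (Real.pi / 3) := by
      rw [Real.sin_pi_div_three]; positivity
    linarith
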